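/- Under assumptions (i) M ⊥ R | X, G=2, (ii) M ⊥ G | X, and (iii) M ⊥ R | X, Y, G=1, with OR(x,y) as the odds ratio relative to Y=0, the target mean decomposes as E[Y | G=1] = Σ_{y,m,x} y · p(Y=y | X=x, M=m, R=1, G=1) · [ p(M=m, X=x, R=1 | G=1) + (OR(x,y)/E[OR(X,Y)|R=1,X=x,M=m,G=1]) · ((p(M=m | X=x, R=1, G=2) − p(M=m, R=1 | X=x, G=1)) / p(R=0 | X=x, G=1)) · p(X=x, R=0 | G=1) ]. -/

import Mathlib

open Finset Set Real

noncomputable def Pr {Ω : Type*} [Fintype Ω] (μ : Ω → ℝ) (A : Set Ω) : ℝ :=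
  ∑ ω, A.indicator μ ω

noncomputable def cPr {Ω : Type*} [Fintype Ω] (μ : Ω → ℝ) (A B : Set Ω) : ℝ :=
  Pr μ (A ∩ B) / Pr μ B

noncomputable def cE {Ω : Type*} [Fintype Ω] (μ : Ω → ℝ) (f : Ω → ℝ) (B : Set Ω) : ℝ :=
  (∑ ω, B.indicator (fun ω' => μ ω' * f ω') ω) / Pr μ B

noncomputable def OddsR {Ω 𝓧 : Type*} [Fintype Ω] (μ : Ω → ℝ) (X : Ω → 𝓧) (Y : Ω → ℝ)
    (R G : Ω → ℕ) (x : 𝓧) (y : ℝ) : ℝ :=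
  (cPr μ {ω | R ω = 0} {ω | X ω = x ∧ Y ω = y ∧ G ω = 1} *
      cPr μ {ω | R ω = 1} {ω | X ω = x ∧ Y ω = 0 ∧ G ω = 1}) /
  (cPr μ {ω | R ω = 1} {ω | X ω = x ∧ Y ω = y ∧ G ω = 1} *
      cPr μ {ω | R ω = 0} {ω | X ω = x ∧ Y ω = 0 ∧ G ω = 1})

lemma Pr_eq_zero {Ω : Type*} [Fintype Ω] (μ : Ω → ℝ) {A : Set Ω} (h : ∀ ω, ω ∉ A) :
    Pr μ A = 0 :=
  Finset.sum_eq_zero fun ω _ => Set.indicator_of_notMem (h ω) μ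

section Aux
variable {Ω : Type*} [Fintype Ω] (μ : Ω → ℝ)

lemma Pr_nonneg (hμ0 : ∀ ω, 0 ≤ μ ω) (A : Set Ω) : 0 ≤ Pr μ A :=
  Finset.sum_nonneg fun ω _ => Set.indicator_nonneg (fun ω _ => hμ0 ω) ω

lemma Pr_mono (hμ0 : ∀ ω, 0 ≤ μ ω) {A B : Set Ω} (h : A ⊆ B) : Pr μ A ≤ Pr μ B := by
  refine Finset.sum_le_sum fun ω _ => ?_
  classical
  by_cases hA : ω ∈ A
  · rw [Set.indicator_of_mem hA, Set.indicator_of_mem (h hA)]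
  · rw [Set.indicator_of_notMem hA]
    exact Set.indicator_nonneg (fun ω _ => hμ0 ω) ω

lemma Pr_congr {A B : Set Ω} (h : A = B) : Pr μ A = Pr μ B := by rw [h]

lemma Pr_split {A B C : Set Ω} (hdisj : Disjoint B C) (hcov : A ⊆ B ∪ C) :
    Pr μ A = Pr μ (A ∩ B) + Pr μ (A ∩ C) := by
  have hA : A = (A ∩ B) ∪ (A ∩ C) := by
    rw [← Set.inter_union_distrib_left, Set.inter_eq_left.mpr hcov]
  unfold Pr
  rw [← Finset.sum_add_distrib]
  refine Finset.sum_congr rfl fun ω _ => ?_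
  classical
  by_cases hωA : ω ∈ A
  · rcases hcov hωA with hB | hC
    · have hnC : ω ∉ C := Set.disjoint_left.mp hdisj hB
      simp [Set.indicator_apply, Set.mem_inter_iff, hωA, hB, hnC]
    · have hnB : ω ∉ B := Set.disjoint_right.mp hdisj hC
      simp [Set.indicator_apply, Set.mem_inter_iff, hωA, hC, hnB]
  · simp [Set.indicator_apply, Set.mem_inter_iff, hωA]

lemma Pr_fiber {α : Type*} [Fintype α] [DecidableEq α] (f : Ω → α) (A : Set Ω) :
    Pr μ A = ∑ a, Pr μ (A ∩ {ω | f ω = a}) := by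
  unfold Pr
  rw [Finset.sum_comm]
  refine Finset.sum_congr rfl fun ω _ => ?_
  classical
  by_cases hA : ω ∈ A
  · rw [Set.indicator_of_mem hA]
    rw [Finset.sum_eq_single (f ω)]
    · simp [Set.indicator_apply, Set.mem_inter_iff, hA]
    · intro b _ hb
      rw [Set.indicator_of_notMem (fun h => hb h.2.symm)]
    · intro h; exact absurd (Finset.mem_univ _) h
  · rw [Set.indicator_of_notMem hA]
    refine (Finset.sum_eq_zero fun b _ => ?_).symm
    rw [Set.indicator_of_notMem (fun h => hA h.1)]

lemma Pr_fiber_image (f : Ω → ℝ) (A : Set Ω) :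
    Pr μ A = ∑ y ∈ Finset.univ.image f, Pr μ (A ∩ {ω | f ω = y}) := by
  classical
  unfold Pr
  rw [Finset.sum_comm]
  refine Finset.sum_congr rfl fun ω _ => ?_
  by_cases hA : ω ∈ A
  · rw [Set.indicator_of_mem hA]
    rw [Finset.sum_eq_single (f ω)]
    · simp [Set.indicator_apply, Set.mem_inter_iff, hA]
    · intro b _ hb
      rw [Set.indicator_of_notMem (fun h => hb h.2.symm)]
    · intro h; exact absurd (Finset.mem_image_of_mem f (Finset.mem_univ ω)) h
  · rw [Set.indicator_of_notMem hA]
    refine (Finset.sum_eq_zero fun b _ => ?_).symm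
    rw [Set.indicator_of_notMem (fun h => hA h.1)]

lemma Pr_const_on {A : Set Ω} {h : Ω → ℝ} {c : ℝ} (hc : ∀ ω ∈ A, h ω = c) :
    Pr (fun ω => μ ω * h ω) A = c * Pr μ A := by
  unfold Pr
  rw [Finset.mul_sum]
  refine Finset.sum_congr rfl fun ω _ => ?_
  classical
  by_cases hA : ω ∈ A
  · rw [Set.indicator_of_mem hA, Set.indicator_of_mem hA, hc ω hA]; ring
  · rw [Set.indicator_of_notMem hA, Set.indicator_of_notMem hA, mul_zero]

lemma sum_indicator_mul_eq (f : Ω → ℝ) (B : Set Ω) :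
    (∑ ω, B.indicator (fun ω' => μ ω' * f ω') ω) = Pr (fun ω => μ ω * f ω) B := rfl

end Aux

set_option maxHeartbeats 2000000 in
theorem stmt15
    {Ω 𝓧 𝓜 : Type*} [Fintype Ω] [Fintype 𝓧] [Fintype 𝓜]
    (μ : Ω → ℝ) (X : Ω → 𝓧) (M : Ω → 𝓜) (Y : Ω → ℝ) (R G : Ω → ℕ)
    (hμ0 : ∀ ω, 0 ≤ μ ω) (hμ1 : ∑ ω, μ ω = 1)
    (hR : ∀ ω, R ω = 0 ∨ R ω = 1)
    (hG : ∀ ω, G ω = 1 ∨ G ω = 2)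
    (h0Y : (0 : ℝ) ∈ Set.range Y)
    (hpos : ∀ x ∈ Set.range X, ∀ m ∈ Set.range M, ∀ y ∈ Set.range Y, ∀ r g : ℕ,
      (r = 0 ∨ r = 1) → (g = 1 ∨ g = 2) →
      0 < Pr μ {ω | X ω = x ∧ M ω = m ∧ Y ω = y ∧ R ω = r ∧ G ω = g})
    (hMAR : ∀ (m : 𝓜) (r : ℕ) (x : 𝓧),
      0 < Pr μ {ω | X ω = x ∧ G ω = 2} →
      cPr μ {ω | M ω = m ∧ R ω = r} {ω | X ω = x ∧ G ω = 2} =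
        cPr μ {ω | M ω = m} {ω | X ω = x ∧ G ω = 2} *
        cPr μ {ω | R ω = r} {ω | X ω = x ∧ G ω = 2})
    (hSel : ∀ (m : 𝓜) (g : ℕ) (x : 𝓧),
      0 < Pr μ {ω | X ω = x} →
      cPr μ {ω | M ω = m ∧ G ω = g} {ω | X ω = x} =
        cPr μ {ω | M ω = m} {ω | X ω = x} * cPr μ {ω | G ω = g} {ω | X ω = x})
    (hCI : ∀ (m : 𝓜) (r : ℕ) (x : 𝓧) (y : ℝ),
      0 < Pr μ {ω | X ω = x ∧ Y ω = y ∧ G ω = 1} →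
      cPr μ {ω | M ω = m ∧ R ω = r} {ω | X ω = x ∧ Y ω = y ∧ G ω = 1} =
        cPr μ {ω | M ω = m} {ω | X ω = x ∧ Y ω = y ∧ G ω = 1} *
        cPr μ {ω | R ω = r} {ω | X ω = x ∧ Y ω = y ∧ G ω = 1})
 :
    cE μ Y {ω | G ω = 1} =
      ∑ y ∈ Finset.univ.image Y, ∑ m : 𝓜, ∑ x : 𝓧,
        y * cPr μ {ω | Y ω = y} {ω | X ω = x ∧ M ω = m ∧ R ω = 1 ∧ G ω = 1} *
          (cPr μ {ω | M ω = m ∧ X ω = x ∧ R ω = 1} {ω | G ω = 1} +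
            (OddsR μ X Y R G x y /
                cE μ (fun ω => OddsR μ X Y R G (X ω) (Y ω))
                  {ω | R ω = 1 ∧ X ω = x ∧ M ω = m ∧ G ω = 1}) *
              ((cPr μ {ω | M ω = m} {ω | X ω = x ∧ R ω = 1 ∧ G ω = 2} -
                  cPr μ {ω | M ω = m ∧ R ω = 1} {ω | X ω = x ∧ G ω = 1}) /
                cPr μ {ω | R ω = 0} {ω | X ω = x ∧ G ω = 1}) *
              cPr μ {ω | X ω = x ∧ R ω = 0} {ω | G ω = 1}) := by
  classical
  have Pc : ∀ {A B : Set Ω}, A = B → Pr μ A = Pr μ B := fun h => by rw [h]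
  have disj01 : Disjoint {ω : Ω | R ω = 0} {ω : Ω | R ω = 1} := by
    rw [Set.disjoint_left]; intro ω h0 h1
    simp only [Set.mem_setOf_eq] at h0 h1; omega
  -- key pointwise identity
  have key : ∀ y ∈ Finset.univ.image Y, ∀ (m : 𝓜) (x : 𝓧),
      y * cPr μ {ω | Y ω = y} {ω | X ω = x ∧ M ω = m ∧ R ω = 1 ∧ G ω = 1} *
          (cPr μ {ω | M ω = m ∧ X ω = x ∧ R ω = 1} {ω | G ω = 1} +
            (OddsR μ X Y R G x y /
                cE μ (fun ω => OddsR μ X Y R G (X ω) (Y ω))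
                  {ω | R ω = 1 ∧ X ω = x ∧ M ω = m ∧ G ω = 1}) *
              ((cPr μ {ω | M ω = m} {ω | X ω = x ∧ R ω = 1 ∧ G ω = 2} -
                  cPr μ {ω | M ω = m ∧ R ω = 1} {ω | X ω = x ∧ G ω = 1}) /
                cPr μ {ω | R ω = 0} {ω | X ω = x ∧ G ω = 1}) *
              cPr μ {ω | X ω = x ∧ R ω = 0} {ω | G ω = 1}) =
      y * ((Pr μ {ω | X ω = x ∧ M ω = m ∧ Y ω = y ∧ R ω = 0 ∧ G ω = 1} + Pr μ {ω | X ω = x ∧ M ω = m ∧ Y ω = y ∧ R ω = 1 ∧ G ω = 1}) / Pr μ {ω | G ω = 1}) := by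
    intro y hyim m x
    have hy : y ∈ Set.range Y := by
      rcases Finset.mem_image.mp hyim with ⟨ω, -, hω⟩; exact ⟨ω, hω⟩
    by_cases hx : x ∈ Set.range X
    swap
    · have hz : ∀ (A : Set Ω), A ⊆ {ω | X ω = x} → Pr μ A = 0 := fun A hA =>
        Pr_eq_zero μ fun ω hω => hx ⟨ω, hA hω⟩
      have e1 : cPr μ {ω | Y ω = y} {ω | X ω = x ∧ M ω = m ∧ R ω = 1 ∧ G ω = 1} = 0 := by
        unfold cPr; rw [hz _ (fun ω h => h.2.1), zero_div]
      have e2 : Pr μ {ω | X ω = x ∧ M ω = m ∧ Y ω = y ∧ R ω = 0 ∧ G ω = 1} = 0 := hz _ (fun ω h => h.1)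
      have e3 : Pr μ {ω | X ω = x ∧ M ω = m ∧ Y ω = y ∧ R ω = 1 ∧ G ω = 1} = 0 := hz _ (fun ω h => h.1)
      rw [e1, e2, e3]; simp
    by_cases hm : m ∈ Set.range M
    swap
    · have hz : ∀ (A : Set Ω), A ⊆ {ω | M ω = m} → Pr μ A = 0 := fun A hA =>
        Pr_eq_zero μ fun ω hω => hm ⟨ω, hA hω⟩
      have e1 : cPr μ {ω | Y ω = y} {ω | X ω = x ∧ M ω = m ∧ R ω = 1 ∧ G ω = 1} = 0 := by
        unfold cPr; rw [hz _ (fun ω h => h.2.2.1), zero_div]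
      have e2 : Pr μ {ω | X ω = x ∧ M ω = m ∧ Y ω = y ∧ R ω = 0 ∧ G ω = 1} = 0 := hz _ (fun ω h => h.2.1)
      have e3 : Pr μ {ω | X ω = x ∧ M ω = m ∧ Y ω = y ∧ R ω = 1 ∧ G ω = 1} = 0 := hz _ (fun ω h => h.2.1)
      rw [e1, e2, e3]; simp
    -- main case
    have posOf : ∀ (y' : ℝ), y' ∈ Set.range Y → ∀ (r g : ℕ), (r = 0 ∨ r = 1) → (g = 1 ∨ g = 2) →
        ∀ {A : Set Ω}, {ω | X ω = x ∧ M ω = m ∧ Y ω = y' ∧ R ω = r ∧ G ω = g} ⊆ A →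
        0 < Pr μ A := fun y' hy' r g hr hg {A} hsub =>
      lt_of_lt_of_le (hpos x hx m hm y' hy' r g hr hg) (Pr_mono μ hμ0 hsub)
    have posG1 : 0 < Pr μ {ω | G ω = 1} := posOf y hy 1 1 (Or.inr rfl) (Or.inl rfl) (fun ω h => by simp only [Set.mem_setOf_eq, Set.mem_inter_iff] at h ⊢; tauto)
    have posB : 0 < Pr μ {ω | X ω = x ∧ M ω = m ∧ R ω = 1 ∧ G ω = 1} := posOf y hy 1 1 (Or.inr rfl) (Or.inl rfl) (fun ω h => by simp only [Set.mem_setOf_eq, Set.mem_inter_iff] at h ⊢; tauto)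
    have posXG1 : 0 < Pr μ {ω | X ω = x ∧ G ω = 1} := posOf y hy 1 1 (Or.inr rfl) (Or.inl rfl) (fun ω h => by simp only [Set.mem_setOf_eq, Set.mem_inter_iff] at h ⊢; tauto)
    have posXG2 : 0 < Pr μ {ω | X ω = x ∧ G ω = 2} := posOf y hy 1 2 (Or.inr rfl) (Or.inr rfl) (fun ω h => by simp only [Set.mem_setOf_eq, Set.mem_inter_iff] at h ⊢; tauto)
    have posX : 0 < Pr μ {ω | X ω = x} := posOf y hy 1 1 (Or.inr rfl) (Or.inl rfl) (fun ω h => by simp only [Set.mem_setOf_eq, Set.mem_inter_iff] at h ⊢; tauto)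
    have posR0 : 0 < Pr μ {ω | X ω = x ∧ R ω = 0 ∧ G ω = 1} := posOf y hy 0 1 (Or.inl rfl) (Or.inl rfl) (fun ω h => by simp only [Set.mem_setOf_eq, Set.mem_inter_iff] at h ⊢; tauto)
    have poswR : 0 < Pr μ ({ω | R ω = 1} ∩ {ω | X ω = x ∧ G ω = 2}) := posOf y hy 1 2 (Or.inr rfl) (Or.inr rfl) (fun ω h => by simp only [Set.mem_setOf_eq, Set.mem_inter_iff] at h ⊢; tauto)
    have posQ : ∀ y' ∈ Set.range Y, 0 < Pr μ {ω | X ω = x ∧ Y ω = y' ∧ G ω = 1} :=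
      fun y' hy' => posOf y' hy' 1 1 (Or.inr rfl) (Or.inl rfl) (fun ω h => by simp only [Set.mem_setOf_eq, Set.mem_inter_iff] at h ⊢; tauto)
    have posW : ∀ y' ∈ Set.range Y, ∀ r : ℕ, (r = 0 ∨ r = 1) → 0 < Pr μ ({ω | R ω = r} ∩ {ω | X ω = x ∧ Y ω = y' ∧ G ω = 1}) :=
      fun y' hy' r hr => posOf y' hy' r 1 hr (Or.inl rfl) (fun ω h => by simp only [Set.mem_setOf_eq, Set.mem_inter_iff] at h ⊢; tauto)
    have posC1 : ∀ y' ∈ Set.range Y, 0 < Pr μ {ω | X ω = x ∧ M ω = m ∧ Y ω = y' ∧ R ω = 1 ∧ G ω = 1} :=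
      fun y' hy' => posOf y' hy' 1 1 (Or.inr rfl) (Or.inl rfl) (fun ω h => h)
    -- CI product form
    have hprod : ∀ y' ∈ Set.range Y, ∀ r : ℕ,
        Pr μ {ω | X ω = x ∧ M ω = m ∧ Y ω = y' ∧ R ω = r ∧ G ω = 1} * Pr μ {ω | X ω = x ∧ Y ω = y' ∧ G ω = 1} = Pr μ ({ω | M ω = m} ∩ {ω | X ω = x ∧ Y ω = y' ∧ G ω = 1}) * Pr μ ({ω | R ω = r} ∩ {ω | X ω = x ∧ Y ω = y' ∧ G ω = 1}) := by
      intro y' hy' r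
      have hq := posQ y' hy'
      have h := hCI m r x y' hq
      unfold cPr at h
      rw [Pc (show {ω | M ω = m ∧ R ω = r} ∩ {ω | X ω = x ∧ Y ω = y' ∧ G ω = 1} =
          {ω | X ω = x ∧ M ω = m ∧ Y ω = y' ∧ R ω = r ∧ G ω = 1} from by ext ω; simp only [Set.mem_inter_iff, Set.mem_setOf_eq]; tauto)] at h
      rw [div_eq_iff hq.ne'] at h
      rw [h]; field_simp
    -- odds ratio formula
    have hORval : ∀ y' ∈ Set.range Y,
        OddsR μ X Y R G x y' = (Pr μ ({ω | R ω = 0} ∩ {ω | X ω = x ∧ Y ω = y' ∧ G ω = 1}) * Pr μ ({ω | R ω = 1} ∩ {ω | X ω = x ∧ Y ω = 0 ∧ G ω = 1})) / (Pr μ ({ω | R ω = 1} ∩ {ω | X ω = x ∧ Y ω = y' ∧ G ω = 1}) * Pr μ ({ω | R ω = 0} ∩ {ω | X ω = x ∧ Y ω = 0 ∧ G ω = 1})) := by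
      intro y' hy'
      have hq := posQ y' hy'
      have hq0 := posQ 0 h0Y
      have hw1 := posW y' hy' 1 (Or.inr rfl)
      have hw0 := posW 0 h0Y 0 (Or.inl rfl)
      unfold OddsR cPr
      rw [div_eq_div_iff (by positivity) (by positivity)]
      ring
    -- c0/c1 ratio
    have hc0c1 : ∀ y' ∈ Set.range Y, Pr μ {ω | X ω = x ∧ M ω = m ∧ Y ω = y' ∧ R ω = 0 ∧ G ω = 1} * Pr μ ({ω | R ω = 1} ∩ {ω | X ω = x ∧ Y ω = y' ∧ G ω = 1}) = Pr μ {ω | X ω = x ∧ M ω = m ∧ Y ω = y' ∧ R ω = 1 ∧ G ω = 1} * Pr μ ({ω | R ω = 0} ∩ {ω | X ω = x ∧ Y ω = y' ∧ G ω = 1}) := by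
      intro y' hy'
      have hq := posQ y' hy'
      have h0 := hprod y' hy' 0
      have h1 := hprod y' hy' 1
      have := mul_right_cancel₀ hq.ne' (show (Pr μ {ω | X ω = x ∧ M ω = m ∧ Y ω = y' ∧ R ω = 0 ∧ G ω = 1} * Pr μ ({ω | R ω = 1} ∩ {ω | X ω = x ∧ Y ω = y' ∧ G ω = 1})) * Pr μ {ω | X ω = x ∧ Y ω = y' ∧ G ω = 1} = (Pr μ {ω | X ω = x ∧ M ω = m ∧ Y ω = y' ∧ R ω = 1 ∧ G ω = 1} * Pr μ ({ω | R ω = 0} ∩ {ω | X ω = x ∧ Y ω = y' ∧ G ω = 1})) * Pr μ {ω | X ω = x ∧ Y ω = y' ∧ G ω = 1} by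
        calc (Pr μ {ω | X ω = x ∧ M ω = m ∧ Y ω = y' ∧ R ω = 0 ∧ G ω = 1} * Pr μ ({ω | R ω = 1} ∩ {ω | X ω = x ∧ Y ω = y' ∧ G ω = 1})) * Pr μ {ω | X ω = x ∧ Y ω = y' ∧ G ω = 1} = (Pr μ {ω | X ω = x ∧ M ω = m ∧ Y ω = y' ∧ R ω = 0 ∧ G ω = 1} * Pr μ {ω | X ω = x ∧ Y ω = y' ∧ G ω = 1}) * Pr μ ({ω | R ω = 1} ∩ {ω | X ω = x ∧ Y ω = y' ∧ G ω = 1}) := by ring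
          _ = (Pr μ ({ω | M ω = m} ∩ {ω | X ω = x ∧ Y ω = y' ∧ G ω = 1}) * Pr μ ({ω | R ω = 0} ∩ {ω | X ω = x ∧ Y ω = y' ∧ G ω = 1})) * Pr μ ({ω | R ω = 1} ∩ {ω | X ω = x ∧ Y ω = y' ∧ G ω = 1}) := by rw [h0]
          _ = (Pr μ ({ω | M ω = m} ∩ {ω | X ω = x ∧ Y ω = y' ∧ G ω = 1}) * Pr μ ({ω | R ω = 1} ∩ {ω | X ω = x ∧ Y ω = y' ∧ G ω = 1})) * Pr μ ({ω | R ω = 0} ∩ {ω | X ω = x ∧ Y ω = y' ∧ G ω = 1}) := by ring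
          _ = (Pr μ {ω | X ω = x ∧ M ω = m ∧ Y ω = y' ∧ R ω = 1 ∧ G ω = 1} * Pr μ {ω | X ω = x ∧ Y ω = y' ∧ G ω = 1}) * Pr μ ({ω | R ω = 0} ∩ {ω | X ω = x ∧ Y ω = y' ∧ G ω = 1}) := by rw [h1]
          _ = (Pr μ {ω | X ω = x ∧ M ω = m ∧ Y ω = y' ∧ R ω = 1 ∧ G ω = 1} * Pr μ ({ω | R ω = 0} ∩ {ω | X ω = x ∧ Y ω = y' ∧ G ω = 1})) * Pr μ {ω | X ω = x ∧ Y ω = y' ∧ G ω = 1} := by ring)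
      exact this
    -- per-y' decomposition of c0
    have hc0 : ∀ y' ∈ Set.range Y,
        Pr μ {ω | X ω = x ∧ M ω = m ∧ Y ω = y' ∧ R ω = 0 ∧ G ω = 1} = (Pr μ ({ω | R ω = 0} ∩ {ω | X ω = x ∧ Y ω = 0 ∧ G ω = 1}) / Pr μ ({ω | R ω = 1} ∩ {ω | X ω = x ∧ Y ω = 0 ∧ G ω = 1})) * (OddsR μ X Y R G x y' * Pr μ {ω | X ω = x ∧ M ω = m ∧ Y ω = y' ∧ R ω = 1 ∧ G ω = 1}) := by
      intro y' hy'
      have hw1 := posW y' hy' 1 (Or.inr rfl)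
      have hw10 := posW 0 h0Y 1 (Or.inr rfl)
      have hw00 := posW 0 h0Y 0 (Or.inl rfl)
      have hT : (Pr μ ({ω | R ω = 0} ∩ {ω | X ω = x ∧ Y ω = 0 ∧ G ω = 1}) / Pr μ ({ω | R ω = 1} ∩ {ω | X ω = x ∧ Y ω = 0 ∧ G ω = 1})) * ((Pr μ ({ω | R ω = 0} ∩ {ω | X ω = x ∧ Y ω = y' ∧ G ω = 1}) * Pr μ ({ω | R ω = 1} ∩ {ω | X ω = x ∧ Y ω = 0 ∧ G ω = 1})) / (Pr μ ({ω | R ω = 1} ∩ {ω | X ω = x ∧ Y ω = y' ∧ G ω = 1}) * Pr μ ({ω | R ω = 0} ∩ {ω | X ω = x ∧ Y ω = 0 ∧ G ω = 1})) * Pr μ {ω | X ω = x ∧ M ω = m ∧ Y ω = y' ∧ R ω = 1 ∧ G ω = 1}) =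
          Pr μ {ω | X ω = x ∧ M ω = m ∧ Y ω = y' ∧ R ω = 1 ∧ G ω = 1} * Pr μ ({ω | R ω = 0} ∩ {ω | X ω = x ∧ Y ω = y' ∧ G ω = 1}) / Pr μ ({ω | R ω = 1} ∩ {ω | X ω = x ∧ Y ω = y' ∧ G ω = 1}) := by
        field_simp
      rw [hORval y' hy', hT, eq_div_iff hw1.ne']
      exact hc0c1 y' hy' 
    -- pM0 identity
    have hM0 : Pr μ {ω | X ω = x ∧ M ω = m ∧ R ω = 0 ∧ G ω = 1} = (Pr μ ({ω | R ω = 0} ∩ {ω | X ω = x ∧ Y ω = 0 ∧ G ω = 1}) / Pr μ ({ω | R ω = 1} ∩ {ω | X ω = x ∧ Y ω = 0 ∧ G ω = 1})) * (∑ y' ∈ Finset.univ.image Y, OddsR μ X Y R G x y' * Pr μ {ω | X ω = x ∧ M ω = m ∧ Y ω = y' ∧ R ω = 1 ∧ G ω = 1}) := by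
      rw [Pr_fiber_image μ Y {ω | X ω = x ∧ M ω = m ∧ R ω = 0 ∧ G ω = 1}]
      rw [Finset.mul_sum]
      refine Finset.sum_congr rfl fun y' hy' => ?_
      have hy'r : y' ∈ Set.range Y := by
        rcases Finset.mem_image.mp hy' with ⟨ω, -, hω⟩; exact ⟨ω, hω⟩
      rw [Pc (show {ω | X ω = x ∧ M ω = m ∧ R ω = 0 ∧ G ω = 1} ∩ {ω | Y ω = y'} = {ω | X ω = x ∧ M ω = m ∧ Y ω = y' ∧ R ω = 0 ∧ G ω = 1} from by ext ω; simp only [Set.mem_inter_iff, Set.mem_setOf_eq]; tauto)]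
      exact hc0 y' hy'r
    -- N positive
    have hNpos : 0 < (∑ y' ∈ Finset.univ.image Y, OddsR μ X Y R G x y' * Pr μ {ω | X ω = x ∧ M ω = m ∧ Y ω = y' ∧ R ω = 1 ∧ G ω = 1}) := by
      refine Finset.sum_pos (fun y' hy' => ?_) ⟨y, hyim⟩
      have hy'r : y' ∈ Set.range Y := by
        rcases Finset.mem_image.mp hy' with ⟨ω, -, hω⟩; exact ⟨ω, hω⟩
      have hw10 := posW 0 h0Y 1 (Or.inr rfl)
      have hw00 := posW 0 h0Y 0 (Or.inl rfl)
      have hw0' := posW y' hy'r 0 (Or.inl rfl)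
      have hw1' := posW y' hy'r 1 (Or.inr rfl)
      have := posC1 y' hy'r
      rw [hORval y' hy'r]
      positivity
    -- cE value
    have hE : cE μ (fun ω => OddsR μ X Y R G (X ω) (Y ω))
        {ω | R ω = 1 ∧ X ω = x ∧ M ω = m ∧ G ω = 1} = (∑ y' ∈ Finset.univ.image Y, OddsR μ X Y R G x y' * Pr μ {ω | X ω = x ∧ M ω = m ∧ Y ω = y' ∧ R ω = 1 ∧ G ω = 1}) / Pr μ {ω | X ω = x ∧ M ω = m ∧ R ω = 1 ∧ G ω = 1} := by
      unfold cE
      have hnum : Pr (fun ω => μ ω * OddsR μ X Y R G (X ω) (Y ω))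
          {ω | R ω = 1 ∧ X ω = x ∧ M ω = m ∧ G ω = 1} = (∑ y' ∈ Finset.univ.image Y, OddsR μ X Y R G x y' * Pr μ {ω | X ω = x ∧ M ω = m ∧ Y ω = y' ∧ R ω = 1 ∧ G ω = 1}) := by
        rw [Pr_fiber_image (fun ω => μ ω * OddsR μ X Y R G (X ω) (Y ω)) Y
          {ω | R ω = 1 ∧ X ω = x ∧ M ω = m ∧ G ω = 1}]
        refine Finset.sum_congr rfl fun y' hy' => ?_
        rw [Pr_const_on μ (c := OddsR μ X Y R G x y')
          (fun ω h => by rw [h.1.2.1, h.2])]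
        congr 1
        exact Pc (show {ω | R ω = 1 ∧ X ω = x ∧ M ω = m ∧ G ω = 1} ∩ {ω | Y ω = y'} =
          {ω | X ω = x ∧ M ω = m ∧ Y ω = y' ∧ R ω = 1 ∧ G ω = 1} from by ext ω; simp only [Set.mem_inter_iff, Set.mem_setOf_eq]; tauto)
      rw [show (∑ ω, ({ω | R ω = 1 ∧ X ω = x ∧ M ω = m ∧ G ω = 1}.indicator
          (fun ω' => μ ω' * OddsR μ X Y R G (X ω') (Y ω')) ω)) =
          Pr (fun ω => μ ω * OddsR μ X Y R G (X ω) (Y ω))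
          {ω | R ω = 1 ∧ X ω = x ∧ M ω = m ∧ G ω = 1} from rfl]
      rw [hnum, Pc (show {ω : Ω | R ω = 1 ∧ X ω = x ∧ M ω = m ∧ G ω = 1} =
          {ω | X ω = x ∧ M ω = m ∧ R ω = 1 ∧ G ω = 1} from by ext ω; simp only [Set.mem_inter_iff, Set.mem_setOf_eq]; tauto)]
    -- MAR product
    have hMARp : Pr μ ({ω | M ω = m ∧ R ω = 1} ∩ {ω | X ω = x ∧ G ω = 2}) * Pr μ {ω | X ω = x ∧ G ω = 2} = Pr μ ({ω | M ω = m} ∩ {ω | X ω = x ∧ G ω = 2}) * Pr μ ({ω | R ω = 1} ∩ {ω | X ω = x ∧ G ω = 2}) := by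
      have h := hMAR m 1 x posXG2
      unfold cPr at h
      rw [div_eq_iff posXG2.ne'] at h
      rw [h]; field_simp
    -- Sel products
    have hSel2 : Pr μ ({ω | M ω = m} ∩ {ω | X ω = x ∧ G ω = 2}) * Pr μ {ω | X ω = x} = Pr μ ({ω | M ω = m} ∩ {ω | X ω = x}) * Pr μ {ω | X ω = x ∧ G ω = 2} := by
      have h := hSel m 2 x posX
      unfold cPr at h
      rw [Pc (show {ω | M ω = m ∧ G ω = 2} ∩ {ω | X ω = x} =
          {ω | M ω = m} ∩ {ω | X ω = x ∧ G ω = 2} from by ext ω; simp only [Set.mem_inter_iff, Set.mem_setOf_eq]; tauto),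
        Pc (show {ω | G ω = 2} ∩ {ω | X ω = x} = {ω | X ω = x ∧ G ω = 2} from by ext ω; simp only [Set.mem_inter_iff, Set.mem_setOf_eq]; tauto)] at h
      rw [div_eq_iff posX.ne'] at h
      rw [h]; field_simp
    have hSel1 : Pr μ ({ω | M ω = m ∧ G ω = 1} ∩ {ω | X ω = x}) * Pr μ {ω | X ω = x} = Pr μ ({ω | M ω = m} ∩ {ω | X ω = x}) * Pr μ {ω | X ω = x ∧ G ω = 1} := by
      have h := hSel m 1 x posX
      unfold cPr at h
      rw [Pc (show {ω | G ω = 1} ∩ {ω | X ω = x} =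
          {ω | X ω = x ∧ G ω = 1} from by ext ω; simp only [Set.mem_inter_iff, Set.mem_setOf_eq]; tauto)] at h
      rw [div_eq_iff posX.ne'] at h
      rw [h]; field_simp
    -- d2
    have hd2 : cPr μ {ω | M ω = m} {ω | X ω = x ∧ R ω = 1 ∧ G ω = 2} = Pr μ ({ω | M ω = m ∧ G ω = 1} ∩ {ω | X ω = x}) / Pr μ {ω | X ω = x ∧ G ω = 1} := by
      unfold cPr
      rw [Pc (show {ω | M ω = m} ∩ {ω | X ω = x ∧ R ω = 1 ∧ G ω = 2} =
          {ω | M ω = m ∧ R ω = 1} ∩ {ω | X ω = x ∧ G ω = 2} from by ext ω; simp only [Set.mem_inter_iff, Set.mem_setOf_eq]; tauto),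
        Pc (show ({ω | X ω = x ∧ R ω = 1 ∧ G ω = 2} : Set Ω) =
          {ω | R ω = 1} ∩ {ω | X ω = x ∧ G ω = 2} from by ext ω; simp only [Set.mem_inter_iff, Set.mem_setOf_eq]; tauto)]
      rw [div_eq_div_iff poswR.ne' posXG1.ne']
      refine mul_right_cancel₀ (mul_pos posXG2 posX).ne' ?_
      calc Pr μ ({ω | M ω = m ∧ R ω = 1} ∩ {ω | X ω = x ∧ G ω = 2}) * Pr μ {ω | X ω = x ∧ G ω = 1} * (Pr μ {ω | X ω = x ∧ G ω = 2} * Pr μ {ω | X ω = x})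
          = (Pr μ ({ω | M ω = m ∧ R ω = 1} ∩ {ω | X ω = x ∧ G ω = 2}) * Pr μ {ω | X ω = x ∧ G ω = 2}) * (Pr μ {ω | X ω = x ∧ G ω = 1} * Pr μ {ω | X ω = x}) := by ring
        _ = (Pr μ ({ω | M ω = m} ∩ {ω | X ω = x ∧ G ω = 2}) * Pr μ ({ω | R ω = 1} ∩ {ω | X ω = x ∧ G ω = 2})) * (Pr μ {ω | X ω = x ∧ G ω = 1} * Pr μ {ω | X ω = x}) := by rw [hMARp]
        _ = (Pr μ ({ω | M ω = m} ∩ {ω | X ω = x ∧ G ω = 2}) * Pr μ {ω | X ω = x}) * (Pr μ ({ω | R ω = 1} ∩ {ω | X ω = x ∧ G ω = 2}) * Pr μ {ω | X ω = x ∧ G ω = 1}) := by ring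
        _ = (Pr μ ({ω | M ω = m} ∩ {ω | X ω = x}) * Pr μ {ω | X ω = x ∧ G ω = 2}) * (Pr μ ({ω | R ω = 1} ∩ {ω | X ω = x ∧ G ω = 2}) * Pr μ {ω | X ω = x ∧ G ω = 1}) := by rw [hSel2]
        _ = (Pr μ ({ω | M ω = m} ∩ {ω | X ω = x}) * Pr μ {ω | X ω = x ∧ G ω = 1}) * (Pr μ ({ω | R ω = 1} ∩ {ω | X ω = x ∧ G ω = 2}) * Pr μ {ω | X ω = x ∧ G ω = 2}) := by ring
        _ = (Pr μ ({ω | M ω = m ∧ G ω = 1} ∩ {ω | X ω = x}) * Pr μ {ω | X ω = x}) * (Pr μ ({ω | R ω = 1} ∩ {ω | X ω = x ∧ G ω = 2}) * Pr μ {ω | X ω = x ∧ G ω = 2}) := by rw [← hSel1]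
        _ = Pr μ ({ω | M ω = m ∧ G ω = 1} ∩ {ω | X ω = x}) * Pr μ ({ω | R ω = 1} ∩ {ω | X ω = x ∧ G ω = 2}) * (Pr μ {ω | X ω = x ∧ G ω = 2} * Pr μ {ω | X ω = x}) := by ring
    -- d1
    have hd1 : cPr μ {ω | M ω = m ∧ R ω = 1} {ω | X ω = x ∧ G ω = 1} = Pr μ {ω | X ω = x ∧ M ω = m ∧ R ω = 1 ∧ G ω = 1} / Pr μ {ω | X ω = x ∧ G ω = 1} := by
      unfold cPr
      rw [Pc (show {ω | M ω = m ∧ R ω = 1} ∩ {ω | X ω = x ∧ G ω = 1} =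
          {ω | X ω = x ∧ M ω = m ∧ R ω = 1 ∧ G ω = 1} from by ext ω; simp only [Set.mem_inter_iff, Set.mem_setOf_eq]; tauto)]
    -- d0
    have hd0 : cPr μ {ω | R ω = 0} {ω | X ω = x ∧ G ω = 1} = Pr μ {ω | X ω = x ∧ R ω = 0 ∧ G ω = 1} / Pr μ {ω | X ω = x ∧ G ω = 1} := by
      unfold cPr
      rw [Pc (show {ω | R ω = 0} ∩ {ω | X ω = x ∧ G ω = 1} =
          {ω | X ω = x ∧ R ω = 0 ∧ G ω = 1} from by ext ω; simp only [Set.mem_inter_iff, Set.mem_setOf_eq]; tauto)]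
    -- dX
    have hdX : cPr μ {ω | X ω = x ∧ R ω = 0} {ω | G ω = 1} = Pr μ {ω | X ω = x ∧ R ω = 0 ∧ G ω = 1} / Pr μ {ω | G ω = 1} := by
      unfold cPr
      rw [Pc (show {ω | X ω = x ∧ R ω = 0} ∩ {ω | G ω = 1} =
          {ω | X ω = x ∧ R ω = 0 ∧ G ω = 1} from by ext ω; simp only [Set.mem_inter_iff, Set.mem_setOf_eq]; tauto)]
    -- split of uMX1
    have hUM : Pr μ ({ω | M ω = m ∧ G ω = 1} ∩ {ω | X ω = x}) = Pr μ {ω | X ω = x ∧ M ω = m ∧ R ω = 0 ∧ G ω = 1} + Pr μ {ω | X ω = x ∧ M ω = m ∧ R ω = 1 ∧ G ω = 1} := by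
      rw [Pr_split μ disj01 (fun ω _ => hR ω)]
      rw [Pc (show ({ω | M ω = m ∧ G ω = 1} ∩ {ω | X ω = x}) ∩ {ω | R ω = 0} =
          {ω | X ω = x ∧ M ω = m ∧ R ω = 0 ∧ G ω = 1} from by ext ω; simp only [Set.mem_inter_iff, Set.mem_setOf_eq]; tauto),
        Pc (show ({ω | M ω = m ∧ G ω = 1} ∩ {ω | X ω = x}) ∩ {ω | R ω = 1} =
          {ω | X ω = x ∧ M ω = m ∧ R ω = 1 ∧ G ω = 1} from by ext ω; simp only [Set.mem_inter_iff, Set.mem_setOf_eq]; tauto)]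
    -- cPr_Y
    have hcY : cPr μ {ω | Y ω = y} {ω | X ω = x ∧ M ω = m ∧ R ω = 1 ∧ G ω = 1} =
        Pr μ {ω | X ω = x ∧ M ω = m ∧ Y ω = y ∧ R ω = 1 ∧ G ω = 1} / Pr μ {ω | X ω = x ∧ M ω = m ∧ R ω = 1 ∧ G ω = 1} := by
      unfold cPr
      rw [Pc (show {ω | Y ω = y} ∩ {ω | X ω = x ∧ M ω = m ∧ R ω = 1 ∧ G ω = 1} = {ω | X ω = x ∧ M ω = m ∧ Y ω = y ∧ R ω = 1 ∧ G ω = 1} from by ext ω; simp only [Set.mem_inter_iff, Set.mem_setOf_eq]; tauto)]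
    -- first cPr
    have hc1 : cPr μ {ω | M ω = m ∧ X ω = x ∧ R ω = 1} {ω | G ω = 1} = Pr μ {ω | X ω = x ∧ M ω = m ∧ R ω = 1 ∧ G ω = 1} / Pr μ {ω | G ω = 1} := by
      unfold cPr
      rw [Pc (show {ω | M ω = m ∧ X ω = x ∧ R ω = 1} ∩ {ω | G ω = 1} =
          {ω | X ω = x ∧ M ω = m ∧ R ω = 1 ∧ G ω = 1} from by ext ω; simp only [Set.mem_inter_iff, Set.mem_setOf_eq]; tauto)]
    -- a0 value
    have posW1y := posW y hy 1 (Or.inr rfl)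
    have hA0 : Pr μ {ω | X ω = x ∧ M ω = m ∧ Y ω = y ∧ R ω = 0 ∧ G ω = 1} = Pr μ {ω | X ω = x ∧ M ω = m ∧ Y ω = y ∧ R ω = 1 ∧ G ω = 1} * Pr μ ({ω | R ω = 0} ∩ {ω | X ω = x ∧ Y ω = y ∧ G ω = 1}) / Pr μ ({ω | R ω = 1} ∩ {ω | X ω = x ∧ Y ω = y ∧ G ω = 1}) := by
      rw [eq_div_iff posW1y.ne']
      exact hc0c1 y hy
    -- assemble
    rw [hcY, hc1, hE, hd2, hd1, hd0, hdX, hUM, hM0, hORval y hy, hA0]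
    have posW0y := posW y hy 0 (Or.inl rfl)
    have posW10 := posW 0 h0Y 1 (Or.inr rfl)
    have posW00 := posW 0 h0Y 0 (Or.inl rfl)
    field_simp
    ring
  -- global assembly
  have hsplit : ∀ (y : ℝ) (m : 𝓜) (x : 𝓧),
      Pr μ {ω | X ω = x ∧ M ω = m ∧ Y ω = y ∧ G ω = 1} = Pr μ {ω | X ω = x ∧ M ω = m ∧ Y ω = y ∧ R ω = 0 ∧ G ω = 1} + Pr μ {ω | X ω = x ∧ M ω = m ∧ Y ω = y ∧ R ω = 1 ∧ G ω = 1} := by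
    intro y m x
    rw [Pr_split μ disj01 (fun ω _ => hR ω)]
    rw [Pc (show {ω | X ω = x ∧ M ω = m ∧ Y ω = y ∧ G ω = 1} ∩ {ω | R ω = 0} =
        {ω | X ω = x ∧ M ω = m ∧ Y ω = y ∧ R ω = 0 ∧ G ω = 1} from by ext ω; simp only [Set.mem_inter_iff, Set.mem_setOf_eq]; tauto),
      Pc (show {ω | X ω = x ∧ M ω = m ∧ Y ω = y ∧ G ω = 1} ∩ {ω | R ω = 1} =
        {ω | X ω = x ∧ M ω = m ∧ Y ω = y ∧ R ω = 1 ∧ G ω = 1} from by ext ω; simp only [Set.mem_inter_iff, Set.mem_setOf_eq]; tauto)]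
  have hsum : ∀ y : ℝ, (∑ m : 𝓜, ∑ x : 𝓧, (Pr μ {ω | X ω = x ∧ M ω = m ∧ Y ω = y ∧ R ω = 0 ∧ G ω = 1} + Pr μ {ω | X ω = x ∧ M ω = m ∧ Y ω = y ∧ R ω = 1 ∧ G ω = 1})) =
      Pr μ {ω | Y ω = y ∧ G ω = 1} := by
    intro y
    calc (∑ m : 𝓜, ∑ x : 𝓧, (Pr μ {ω | X ω = x ∧ M ω = m ∧ Y ω = y ∧ R ω = 0 ∧ G ω = 1} + Pr μ {ω | X ω = x ∧ M ω = m ∧ Y ω = y ∧ R ω = 1 ∧ G ω = 1}))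
        = ∑ m : 𝓜, ∑ x : 𝓧, Pr μ {ω | X ω = x ∧ M ω = m ∧ Y ω = y ∧ G ω = 1} := by
          exact Finset.sum_congr rfl fun m _ => Finset.sum_congr rfl fun x _ =>
            (hsplit y m x).symm
      _ = ∑ m : 𝓜, Pr μ {ω | M ω = m ∧ Y ω = y ∧ G ω = 1} := by
          refine Finset.sum_congr rfl fun m _ => ?_
          rw [Pr_fiber μ X {ω | M ω = m ∧ Y ω = y ∧ G ω = 1}]
          exact Finset.sum_congr rfl fun x _ =>
            Pc (show ({ω | X ω = x ∧ M ω = m ∧ Y ω = y ∧ G ω = 1} : Set Ω) =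
              {ω | M ω = m ∧ Y ω = y ∧ G ω = 1} ∩ {ω | X ω = x} from by ext ω; simp only [Set.mem_inter_iff, Set.mem_setOf_eq]; tauto)
      _ = Pr μ {ω | Y ω = y ∧ G ω = 1} := by
          rw [Pr_fiber μ M {ω | Y ω = y ∧ G ω = 1}]
          exact Finset.sum_congr rfl fun m _ =>
            Pc (show ({ω | M ω = m ∧ Y ω = y ∧ G ω = 1} : Set Ω) =
              {ω | Y ω = y ∧ G ω = 1} ∩ {ω | M ω = m} from by ext ω; simp only [Set.mem_inter_iff, Set.mem_setOf_eq]; tauto)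
  calc cE μ Y {ω | G ω = 1}
      = ∑ y ∈ Finset.univ.image Y, ∑ m : 𝓜, ∑ x : 𝓧,
          y * ((Pr μ {ω | X ω = x ∧ M ω = m ∧ Y ω = y ∧ R ω = 0 ∧ G ω = 1} + Pr μ {ω | X ω = x ∧ M ω = m ∧ Y ω = y ∧ R ω = 1 ∧ G ω = 1}) / Pr μ {ω | G ω = 1}) := by
        show Pr (fun ω => μ ω * Y ω) {ω | G ω = 1} / Pr μ {ω | G ω = 1} = _
        rw [Pr_fiber_image (fun ω => μ ω * Y ω) Y {ω | G ω = 1}, Finset.sum_div]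
        refine Finset.sum_congr rfl fun y hy => ?_
        rw [Pr_const_on μ (c := y) (fun ω h => h.2)]
        rw [Pc (show {ω : Ω | G ω = 1} ∩ {ω | Y ω = y} =
            {ω | Y ω = y ∧ G ω = 1} from by ext ω; simp only [Set.mem_inter_iff, Set.mem_setOf_eq]; tauto)]
        rw [← hsum y]
        simp only [Finset.mul_sum, Finset.sum_div, mul_div_assoc]
    _ = _ := by
        exact Finset.sum_congr rfl fun y hy => Finset.sum_congr rfl fun m _ =>
          Finset.sum_congr rfl fun x _ => (key y hy m x).symm
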